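/- Let f be the 19-uniform morphism on {0,1} defined by f(0) = 0110100110110010110 and f(1) = 1001011001001101001 (Rampersad's morphism). For every n ≥ 1, the word f^n(0) is a palindrome of odd length 19^n that contains no factor of length p with period q satisfying p/q > 7/3. -/

import Mathlib

/-- A word `x` has period `q` (with `1 ≤ q ≤ |x|`) if `x[i] = x[i+q]`
whenever both indices are in range. -/
def HasPeriod {A : Type*} (x : List A) (q : ℕ) : Prop :=
  1 ≤ q ∧ q ≤ x.length ∧ ∀ i : ℕ, i + q < x.length → x[i]? = x[i + q]?

/-- `w` contains an `e`-power: a nonempty factor of length `p` with period `q`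
and `p/q ≥ e`. -/
def ContainsPowGe {A : Type*} (w : List A) (e : ℚ) : Prop :=
  ∃ x : List A, ∃ q : ℕ, x ≠ [] ∧ x <:+: w ∧ HasPeriod x q ∧
    e ≤ (x.length : ℚ) / (q : ℚ)

/-- `w` contains an `e⁺`-power: a nonempty factor of length `p` with period `q`
and `p/q > e`. -/
def ContainsPowGt {A : Type*} (w : List A) (e : ℚ) : Prop :=
  ∃ x : List A, ∃ q : ℕ, x ≠ [] ∧ x <:+: w ∧ HasPeriod x q ∧
    e < (x.length : ℚ) / (q : ℚ)

/-- The critical exponent of `w` is exactly `e`: some nonempty factor has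
exponent at least `e`, and no nonempty factor has exponent exceeding `e`. -/
def CritExpIs {A : Type*} (w : List A) (e : ℚ) : Prop :=
  ContainsPowGe w e ∧ ¬ ContainsPowGt w e

/-- Rampersad's 19-uniform morphism on {0,1}. -/
def rampersad : List (Fin 2) → List (Fin 2) :=
  fun w => w.flatMap (fun a =>
    if a = 0 then [0, 1, 1, 0, 1, 0, 0, 1, 1, 0, 1, 1, 0, 0, 1, 0, 1, 1, 0]
    else [1, 0, 0, 1, 0, 1, 1, 0, 0, 1, 0, 0, 1, 1, 0, 1, 0, 0, 1])

namespace RampersadAux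

/-- The image of a single letter. -/
def img (a : Fin 2) : List (Fin 2) :=
  if a = 0 then [0, 1, 1, 0, 1, 0, 0, 1, 1, 0, 1, 1, 0, 0, 1, 0, 1, 1, 0]
  else [1, 0, 0, 1, 0, 1, 1, 0, 0, 1, 0, 0, 1, 1, 0, 1, 0, 0, 1]

lemma rampersad_eq (w : List (Fin 2)) : rampersad w = w.flatMap img := rfl

lemma img_length (a : Fin 2) : (img a).length = 19 := by
  rcases (by omega : a = 0 ∨ a = 1) with h | h <;> subst h <;> rfl

lemma rampersad_append (u v : List (Fin 2)) :
    rampersad (u ++ v) = rampersad u ++ rampersad v := by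
  simp [rampersad_eq]

lemma rampersad_cons (a : Fin 2) (w : List (Fin 2)) :
    rampersad (a :: w) = img a ++ rampersad w := rfl

lemma length_rampersad (w : List (Fin 2)) : (rampersad w).length = 19 * w.length := by
  induction w with
  | nil => rfl
  | cons a w ih =>
    rw [rampersad_cons, List.length_append, ih, img_length, List.length_cons]
    ring

lemma rampersad_getElem? (w : List (Fin 2)) (j r : ℕ) (a : Fin 2)
    (hj : w[j]? = some a) (hr : r < 19) :
    (rampersad w)[19 * j + r]? = (img a)[r]? := by
  induction w generalizing j with
  | nil => simp at hj
  | cons b w ih =>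
    rcases j with _ | j
    · simp only [List.getElem?_cons_zero, Option.some.injEq] at hj
      subst hj
      rw [rampersad_cons]
      have : 19 * 0 + r < (img b).length := by rw [img_length]; omega
      simpa using List.getElem?_append_left this
    · simp only [List.getElem?_cons_succ] at hj
      rw [rampersad_cons]
      have h1 : (img b).length ≤ 19 * (j + 1) + r := by rw [img_length]; omega
      rw [List.getElem?_append_right h1, img_length]
      have : 19 * (j + 1) + r - 19 = 19 * j + r := by omega
      rw [this]
      exact ih j hj

lemma img_inj : ∀ (a b : Fin 2) (r : ℕ), r < 19 → (img a)[r]? = (img b)[r]? → a = b := by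
  decide

lemma sync : ∀ (a b c : Fin 2) (k : ℕ), k < 19 → 0 < k →
    ¬ (∀ r : ℕ, r < 19 → (img a)[r]? = (img b ++ img c)[r + k]?) := by
  decide

/-- pointwise description of infix -/
lemma infix_getElem? {A : Type*} {x w : List A} (h : x <:+: w) :
    ∃ i, i + x.length ≤ w.length ∧ ∀ m < x.length, x[m]? = w[i + m]? := by
  obtain ⟨s, t, h⟩ := h
  refine ⟨s.length, ?_, ?_⟩
  · rw [← h]; simp
  · intro m hm
    rw [← h, List.append_assoc, List.getElem?_append_right (by omega),
      Nat.add_sub_cancel_left, List.getElem?_append_left hm]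

lemma infix_of_getElem? {A : Type*} {x w : List A} (i : ℕ)
    (hlen : i + x.length ≤ w.length) (h : ∀ m < x.length, x[m]? = w[i + m]?) :
    x <:+: w := by
  have hx : x = (w.drop i).take x.length := by
    apply List.ext_getElem?
    intro n
    by_cases hn : n < x.length
    · rw [h n hn, List.getElem?_take, if_pos hn, List.getElem?_drop]
    · rw [List.getElem?_eq_none (by omega), List.getElem?_eq_none]
      simp only [List.length_take, List.length_drop]
      omega
  rw [hx]
  exact (List.take_prefix _ _).isInfix.trans (List.drop_suffix _ _).isInfix

lemma exp_lt (L q : ℕ) (hq : 0 < q) : (7 / 3 : ℚ) < (L : ℚ) / (q : ℚ) ↔ 7 * q < 3 * L := by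
  rw [div_lt_div_iff₀ (by norm_num) (by exact_mod_cast hq)]
  constructor
  · intro h
    have : (7 * q : ℚ) < 3 * L := by linarith
    exact_mod_cast this
  · intro h
    have : (7 * q : ℚ) < 3 * L := by exact_mod_cast h
    linarith

/-- Encode a binary word as a natural number (LSB = first letter). -/
def toN : List (Fin 2) → ℕ
  | [] => 0
  | a :: l => a.val + 2 * toN l

lemma testBit_toN (w : List (Fin 2)) : ∀ m : ℕ, (toN w).testBit m = decide (w[m]? = some 1) := by
  induction w with
  | nil => intro m; simp [toN]
  | cons a l ih =>
    intro m
    have ha2 : a.val < 2 := a.isLt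
    cases m with
    | zero =>
      rw [Nat.testBit_zero]
      have : (toN (a :: l)) % 2 = a.val := by
        show (a.val + 2 * toN l) % 2 = a.val
        omega
      rw [this]
      rcases (by omega : a = 0 ∨ a = 1) with h | h <;> subst h <;> simp
    | succ m =>
      rw [Nat.testBit_add_one]
      have : (toN (a :: l)) / 2 = toN l := by
        show (a.val + 2 * toN l) / 2 = toN l
        omega
      rw [this, ih]
      simp

/-- Bool-valued check that `w` has no `(7/3)⁺`-power. -/
def chkB (w : List (Fin 2)) : Bool :=
  (List.range w.length).all fun i =>
    (List.range w.length).all fun qm =>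
      decide (w.length < i + (7 * (qm + 1) / 3 + 1)) ||
      !decide ((((toN w >>> i) ^^^ (toN w >>> (i + (qm + 1)))) &&&
        (2 ^ (7 * (qm + 1) / 3 + 1 - (qm + 1)) - 1)) = 0)

lemma fin2_eq_iff (a b : Fin 2) (h : decide (a = 1) = decide (b = 1)) : a = b := by
  rcases (by omega : a = 0 ∨ a = 1) with h1 | h1 <;>
    rcases (by omega : b = 0 ∨ b = 1) with h2 | h2 <;>
    subst h1 <;> subst h2 <;> simp_all

lemma seg_iff (w : List (Fin 2)) (i q d : ℕ) (h : i + q + d ≤ w.length) :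
    ((((toN w >>> i) ^^^ (toN w >>> (i + q))) &&& (2 ^ d - 1)) = 0) ↔
      ∀ m < d, w[i + m]? = w[i + m + q]? := by
  constructor
  · intro h0 m hm
    have hb := congrArg (fun n => Nat.testBit n m) h0
    simp only [Nat.testBit_and, Nat.testBit_xor, Nat.testBit_shiftRight,
      Nat.testBit_two_pow_sub_one, Nat.zero_testBit] at hb
    have hd : decide (m < d) = true := by simp [hm]
    rw [hd, Bool.and_true, bne_eq_false_iff_eq] at hb
    simp only [testBit_toN] at hb
    have h1 : i + m < w.length := by omega
    have h2 : i + m + q < w.length := by omega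
    have e : i + q + m = i + m + q := by omega
    rw [e, List.getElem?_eq_getElem h1, List.getElem?_eq_getElem h2] at hb
    simp only [Option.some.injEq] at hb
    rw [List.getElem?_eq_getElem h1, List.getElem?_eq_getElem h2]
    exact congrArg some (fin2_eq_iff _ _ hb)
  · intro hall
    apply Nat.eq_of_testBit_eq
    intro j
    rw [Nat.zero_testBit, Nat.testBit_and, Nat.testBit_xor, Nat.testBit_shiftRight,
      Nat.testBit_shiftRight, Nat.testBit_two_pow_sub_one]
    by_cases hj : j < d
    · have := hall j hj
      have e : i + q + j = i + j + q := by omega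
      rw [e, testBit_toN, testBit_toN, this]
      simp
    · simp [hj]

lemma chk_iff (w : List (Fin 2)) : chkB w = true ↔ ¬ ContainsPowGt w (7 / 3) := by
  constructor
  · intro hchk hcon
    obtain ⟨x, q, hne, hinf, ⟨hq1, hqle, hper⟩, hexp⟩ := hcon
    obtain ⟨i, hlen, hpt⟩ := infix_getElem? hinf
    have hq0 : 0 < q := hq1
    have hL : 7 * q < 3 * x.length := (exp_lt _ _ hq0).mp hexp
    set L0 := 7 * q / 3 + 1 with hL0
    have hdiv := Nat.div_add_mod (7 * q) 3
    have hmod := Nat.mod_lt (7 * q) (show 0 < 3 by norm_num)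
    have hL0le : L0 ≤ x.length := by omega
    have hxpos : 0 < x.length := List.length_pos_iff.mpr hne
    simp only [chkB, List.all_eq_true, List.mem_range] at hchk
    have hi : i < w.length := by omega
    have hqm : q - 1 < w.length := by omega
    have := hchk i hi (q - 1) hqm
    have hq' : q - 1 + 1 = q := by omega
    rw [hq'] at this
    rw [Bool.or_eq_true, decide_eq_true_iff, Bool.not_eq_true', decide_eq_false_iff_not] at this
    rcases this with h | h
    · omega
    · apply h
      rw [seg_iff w i q (L0 - q) (by omega)]
      intro m hm
      have hm' : m < L0 - q := hm
      have hmq : m + q < L0 := by omega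
      have h1 := hpt m (by omega)
      have h2 := hpt (m + q) (by omega)
      have h3 := hper m (by omega)
      have e : i + m + q = i + (m + q) := by omega
      rw [e, ← h1, ← h2, h3]
  · intro hncon
    simp only [chkB, List.all_eq_true, List.mem_range]
    intro i hi qm hqm
    set q := qm + 1 with hq
    set L0 := 7 * q / 3 + 1 with hL0
    rw [Bool.or_eq_true, decide_eq_true_iff, Bool.not_eq_true', decide_eq_false_iff_not]
    by_cases hfit : w.length < i + L0
    · left; exact hfit
    · right
      have hdiv0 := Nat.div_add_mod (7 * q) 3
      have hmod0 := Nat.mod_lt (7 * q) (show 0 < 3 by norm_num)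
      intro hseg
      rw [seg_iff w i q (L0 - q) (by omega)] at hseg
      apply hncon
      refine ⟨(w.drop i).take L0, q, ?_, ?_, ⟨?_, ?_, ?_⟩, ?_⟩
      · have : ((w.drop i).take L0).length = L0 := by
          rw [List.length_take, List.length_drop]; omega
        intro hnil
        rw [hnil] at this
        simp at this
      · exact (List.take_prefix _ _).isInfix.trans (List.drop_suffix _ _).isInfix
      · omega
      · have hdiv := Nat.div_add_mod (7 * q) 3
        have hmod := Nat.mod_lt (7 * q) (show 0 < 3 by norm_num)
        rw [List.length_take, List.length_drop]
        omega
      · intro m hm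
        rw [List.length_take, List.length_drop] at hm
        have hmL : m < L0 := by omega
        have hmqL : m + q < L0 := by omega
        rw [List.getElem?_take, if_pos hmL, List.getElem?_drop,
          List.getElem?_take, if_pos hmqL, List.getElem?_drop]
        have := hseg m (by omega)
        rw [this]
        congr 1
        omega
      · rw [List.length_take, List.length_drop]
        rw [exp_lt _ _ (by omega)]
        have hdiv := Nat.div_add_mod (7 * q) 3
        have hmod := Nat.mod_lt (7 * q) (show 0 < 3 by norm_num)
        omega

lemma contains_mono {A : Type*} {y w : List A} {e : ℚ}
    (h : ContainsPowGt y e) (hyw : y <:+: w) : ContainsPowGt w e := by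
  obtain ⟨x, q, h1, h2, h3, h4⟩ := h
  exact ⟨x, q, h1, h2.trans hyw, h3, h4⟩

/-- enumeration of all binary words of length ≤ n -/
def enumLe : ℕ → List (List (Fin 2))
  | 0 => [[]]
  | n + 1 => [] :: (enumLe n).flatMap fun l => [0 :: l, 1 :: l]

lemma mem_enumLe : ∀ (n : ℕ) (y : List (Fin 2)), y.length ≤ n → y ∈ enumLe n := by
  intro n
  induction n with
  | zero =>
    intro y hy
    have : y = [] := List.length_eq_zero_iff.mp (by omega)
    subst this
    exact List.mem_singleton.mpr rfl
  | succ n ih =>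
    intro y hy
    rcases y with _ | ⟨a, l⟩
    · exact List.mem_cons_self
    · have hl : l ∈ enumLe n := ih l (by simpa using hy)
      refine List.mem_cons_of_mem _ (List.mem_flatMap.mpr ⟨l, hl, ?_⟩)
      rcases (by omega : a = 0 ∨ a = 1) with h | h <;> subst h <;> simp

set_option maxHeartbeats 4000000 in
set_option maxRecDepth 100000 in
lemma check5 : ∀ y ∈ enumLe 5, chkB y = true → chkB (rampersad y) = true := by
  decide

/-- Key preservation lemma. -/
lemma preserve (w : List (Fin 2)) (hw : ¬ ContainsPowGt w (7 / 3)) :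
    ¬ ContainsPowGt (rampersad w) (7 / 3) := by
  intro hcon
  obtain ⟨x, q, hne, hinf, ⟨hq1, hqle, hper⟩, hexp⟩ := hcon
  obtain ⟨i, hlen, hpt⟩ := infix_getElem? hinf
  rw [length_rampersad] at hlen
  set n := w.length with hn
  have hq0 : 0 < q := hq1
  have h73 : 7 * q < 3 * x.length := (exp_lt _ _ hq0).mp hexp
  have hxpos : 0 < x.length := List.length_pos_iff.mpr hne
  -- getElem? facts about w
  have hwget : ∀ (j : ℕ) (hj : j < w.length), w[j]? = some (w[j]'hj) :=
    fun j hj => List.getElem?_eq_getElem hj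
  by_cases hbig : 65 ≤ x.length
  · -- big case
    set W := x.length - q with hW
    have hW37 : 37 ≤ W := by omega
    -- period on F := rampersad w
    have hP : ∀ p, i ≤ p → p + q < i + x.length →
        (rampersad w)[p]? = (rampersad w)[p + q]? := by
      intro p hp1 hp2
      have h1 := hpt (p - i) (by omega)
      have h2 := hpt (p - i + q) (by omega)
      have h3 := hper (p - i) (by omega)
      have e1 : i + (p - i) = p := by omega
      have e2 : i + (p - i + q) = p + q := by omega
      rw [e1] at h1; rw [e2] at h2
      rw [← h1, ← h2, h3]
    have hi19 := Nat.div_add_mod i 19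
    have him19 := Nat.mod_lt i (show 0 < 19 by norm_num)
    -- Step 1: q % 19 = 0
    have hq19 : q % 19 = 0 := by
      by_contra hr
      have hq19' := Nat.div_add_mod q 19
      have hqm19 := Nat.mod_lt q (show 0 < 19 by norm_num)
      set r := q % 19 with hrdef
      set k := q / 19 with hkdef
      set j := (i + 18) / 19 with hjdef
      have hj19 := Nat.div_add_mod (i + 18) 19
      have hjm19 := Nat.mod_lt (i + 18) (show 0 < 19 by norm_num)
      -- i ≤ 19 j and 19 j + 19 ≤ i + 37
      have hji : i ≤ 19 * j := by omega
      have hji2 : 19 * j + 19 ≤ i + 37 := by omega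
      have hjn : j < n := by omega
      have hjkn : j + k < n := by omega
      have hjk1n : j + k + 1 < n := by
        -- from position 19*(j+k+1) + (r - 1) ≤ 19 j + 18 + q < i + x.length ≤ 19 n
        omega
      apply sync w[j] (w[j + k]'(by omega)) (w[j + k + 1]'(by omega)) r (by omega) (by omega)
      intro r' hr'
      have hpos1 : (rampersad w)[19 * j + r']? = (img w[j])[r']? :=
        rampersad_getElem? w j r' _ (hwget j hjn) hr'
      have hper' : (rampersad w)[19 * j + r']? = (rampersad w)[19 * j + r' + q]? :=
        hP (19 * j + r') (by omega) (by omega)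
      rw [← hpos1, hper']
      by_cases hcase : r' + r < 19
      · have e : 19 * j + r' + q = 19 * (j + k) + (r' + r) := by omega
        rw [e, rampersad_getElem? w (j + k) (r' + r) _ (hwget (j + k) (by omega)) hcase]
        rw [List.getElem?_append_left (by rw [img_length]; omega)]
      · have e : 19 * j + r' + q = 19 * (j + k + 1) + (r' + r - 19) := by omega
        rw [e, rampersad_getElem? w (j + k + 1) (r' + r - 19) _ (hwget (j + k + 1) (by omega))
          (by omega)]
        rw [List.getElem?_append_right (by rw [img_length]; omega), img_length]
    -- Step 2: desubstitute
    set k := q / 19 with hkdef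
    have hqk : q = 19 * k := by omega
    have hk1 : 1 ≤ k := by omega
    set j0 := i / 19 with hj0def
    set j1 := (i + W - 1) / 19 with hj1def
    have hj119 := Nat.div_add_mod (i + W - 1) 19
    have hj1m19 := Nat.mod_lt (i + W - 1) (show 0 < 19 by norm_num)
    set t := j1 - j0 + 1 with htdef
    have hj0j1 : j0 ≤ j1 := by omega
    have hcover : 19 * t ≥ W := by omega
    have hjw : ∀ j, j0 ≤ j → j ≤ j1 → w[j]? = w[j + k]? := by
      intro j hja hjb
      set p := max i (19 * j) with hpdef
      have hp1 : i ≤ p := le_max_left _ _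
      have hp2 : p < i + W := by
        rcases max_cases i (19 * j) with ⟨he, _⟩ | ⟨he, _⟩ <;> omega
      have hp3 : 19 * j ≤ p := le_max_right _ _
      have hp4 : p < 19 * j + 19 := by
        rcases max_cases i (19 * j) with ⟨he, hle⟩ | ⟨he, hlt⟩ <;> omega
      set r' := p - 19 * j with hr'def
      have hr'19 : r' < 19 := by omega
      have hjn : j < n := by omega
      have hjkn : j + k < n := by omega
      have hF := hP p hp1 (by omega)
      have e1 : p = 19 * j + r' := by omega
      have e2 : p + q = 19 * (j + k) + r' := by omega
      have hA : (rampersad w)[p]? = (img (w[j]'hjn))[r']? := by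
        rw [e1]; exact rampersad_getElem? w j r' _ (hwget j hjn) hr'19
      have hB : (rampersad w)[p + q]? = (img (w[j + k]'hjkn))[r']? := by
        rw [e2]; exact rampersad_getElem? w (j + k) r' _ (hwget (j + k) hjkn) hr'19
      rw [hA, hB] at hF
      have := img_inj _ _ r' hr'19 hF
      rw [hwget j hjn, hwget (j + k) hjkn]
      exact congrArg some this
    have hj1kn : j0 + (t + k) ≤ n := by omega
    apply hw
    refine ⟨(w.drop j0).take (t + k), k, ?_, ?_, ⟨hk1, ?_, ?_⟩, ?_⟩
    · have : ((w.drop j0).take (t + k)).length = t + k := by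
        rw [List.length_take, List.length_drop]; omega
      intro hnil; rw [hnil] at this; simp at this; omega
    · exact (List.take_prefix _ _).isInfix.trans (List.drop_suffix _ _).isInfix
    · rw [List.length_take, List.length_drop]; omega
    · intro m hm
      rw [List.length_take, List.length_drop] at hm
      have hm2 : m + k < t + k := by omega
      rw [List.getElem?_take, List.getElem?_take, if_pos (by omega : m < t + k),
        if_pos hm2, List.getElem?_drop, List.getElem?_drop]
      have := hjw (j0 + m) (by omega) (by omega)
      rw [this]
      congr 1
      omega
    · rw [List.length_take, List.length_drop]
      rw [exp_lt _ _ (by omega)]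
      have : min (t + k) (n - j0) = t + k := by omega
      rw [this]
      -- 3 (t + k) > 7 k ⇔ 3 t > 4 k; from 57 t ≥ 3 W > 4 q = 76 k
      omega
  · -- small case: x.length ≤ 64
    have hi19 := Nat.div_add_mod i 19
    have him19 := Nat.mod_lt i (show 0 < 19 by norm_num)
    set j0 := i / 19 with hj0def
    set j1 := (i + x.length - 1) / 19 with hj1def
    have hj119 := Nat.div_add_mod (i + x.length - 1) 19
    have hj1m19 := Nat.mod_lt (i + x.length - 1) (show 0 < 19 by norm_num)
    set t := j1 - j0 + 1 with htdef
    have ht5 : t ≤ 5 := by omega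
    have hj0n : j0 < n := by omega
    set y := (w.drop j0).take t with hydef
    have hylen : y.length = min t (n - j0) := by
      rw [hydef, List.length_take, List.length_drop]
    have hy5 : y.length ≤ 5 := by omega
    have hyinf : y <:+: w :=
      (List.take_prefix _ _).isInfix.trans (List.drop_suffix _ _).isInfix
    -- bound: i + x.length ≤ 19 * (j0 + y.length)
    have hbound : i + x.length ≤ 19 * (j0 + y.length) := by
      rcases Nat.le_total t (n - j0) with h | h
      · have : y.length = t := by omega
        omega
      · have : y.length = n - j0 := by omega
        omega
    -- x is infix of rampersad y
    have hdecomp : rampersad w = rampersad (w.take j0) ++ rampersad y ++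
        rampersad ((w.drop j0).drop t) := by
      rw [← rampersad_append, ← rampersad_append, hydef, List.append_assoc,
        List.take_append_drop, List.take_append_drop]
    have hlent : (rampersad (w.take j0)).length = 19 * j0 := by
      rw [length_rampersad, List.length_take]
      omega
    have hxy : x <:+: rampersad y := by
      apply infix_of_getElem? (i - 19 * j0)
      · rw [length_rampersad]; omega
      · intro m hm
        rw [hpt m hm, hdecomp, List.append_assoc,
          List.getElem?_append_right (by rw [hlent]; omega), hlent,
          List.getElem?_append_left (by rw [length_rampersad]; omega)]
        congr 1
        omega
    have hychk : chkB y = true := (chk_iff y).mpr (fun hc => hw (contains_mono hc hyinf))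
    have hfychk : chkB (rampersad y) = true := check5 y (mem_enumLe 5 y hy5) hychk
    exact (chk_iff (rampersad y)).mp hfychk
      ⟨x, q, hne, hxy, ⟨hq1, hqle, hper⟩, hexp⟩

lemma img_reverse (a : Fin 2) : (img a).reverse = img a := by
  rcases (by omega : a = 0 ∨ a = 1) with h | h <;> subst h <;> rfl

lemma rampersad_reverse (w : List (Fin 2)) :
    (rampersad w).reverse = rampersad w.reverse := by
  induction w with
  | nil => rfl
  | cons a w ih =>
    rw [rampersad_cons, List.reverse_append, ih, img_reverse, List.reverse_cons,
      rampersad_append]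
    simp [rampersad_cons, rampersad_eq]

lemma pf_iter (n : ℕ) : ¬ ContainsPowGt ((rampersad^[n]) [0]) (7 / 3) := by
  induction n with
  | zero => exact (chk_iff [0]).mp (by decide)
  | succ n ih =>
    rw [Function.iterate_succ_apply']
    exact preserve _ ih

lemma rev_iter (n : ℕ) : ((rampersad^[n]) [0]).reverse = (rampersad^[n]) [0] := by
  induction n with
  | zero => rfl
  | succ n ih =>
    rw [Function.iterate_succ_apply', rampersad_reverse, ih]

lemma len_iter (n : ℕ) : ((rampersad^[n]) [0]).length = 19 ^ n := by
  induction n with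
  | zero => rfl
  | succ n ih =>
    rw [Function.iterate_succ_apply', length_rampersad, ih, pow_succ]
    ring

end RampersadAux

theorem rampersad_iterate_palindrome_avoids (n : ℕ) (hn : 1 ≤ n) :
    ((rampersad^[n]) [0]).reverse = (rampersad^[n]) [0] ∧
    ((rampersad^[n]) [0]).length = 19 ^ n ∧
    Odd ((rampersad^[n]) [0]).length ∧
    ¬ ContainsPowGt ((rampersad^[n]) [0]) (7 / 3) := by
  refine ⟨RampersadAux.rev_iter n, RampersadAux.len_iter n, ?_, RampersadAux.pf_iter n⟩
  rw [RampersadAux.len_iter n]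
  exact Odd.pow ⟨9, by norm_num⟩
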